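/- Let H be a real Hilbert space with inner product ⟪·,·⟫, let ψ, φ ∈ H with ⟪φ,ψ⟫ ≠ 0, let ρ, λ, β ∈ ℝ, and set α := (−ρ + 2λ + β²)/⟪φ,ψ⟫². Define v : ℝ × H → ℝ by v(s,x) = α e^{−ρs} max(⟪x,ψ⟫,0)². Then for every s ∈ ℝ and every x ∈ H with ⟪x,ψ⟫ ≠ 0, the map y ↦ v(s,y) is twice Fréchet differentiable at x, and writing D_x v(s,x) for its first Fréchet derivative and D²_x v(s,x) for its second, the identity −ρ·v(s,x) + λ·(D_x v(s,x))(x) + (β²/2)·(D²_x v(s,x))(x,x) − (e^{ρs}/4)·((D_x v(s,x))(φ))² = 0 holds. -/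

import Mathlib

open RealInnerProductSpace Filter Topology

/-- Off the hyperplane `⟪x,ψ⟫ = 0`, the function `v(s,x) = α e^{−ρs} max(⟪x,ψ⟫,0)²`
(with `α = (−ρ + 2λ + β²)/⟪φ,ψ⟫²`) is twice Fréchet differentiable in `x` and solves
`−ρ v + λ (D_x v)(x) + (β²/2)(D²_x v)(x,x) − (e^{ρs}/4)((D_x v)(φ))² = 0`. -/
theorem candidate_value_function_solves_HJB_off_hyperplane
    {H : Type*} [NormedAddCommGroup H] [InnerProductSpace ℝ H]
    (ψ φ : H) (hφψ : ⟪φ, ψ⟫ ≠ 0) (ρ lam β α : ℝ)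
    (hα : α = (-ρ + 2 * lam + β ^ 2) / ⟪φ, ψ⟫ ^ 2)
    (v : ℝ → H → ℝ)
    (hv : ∀ (s : ℝ) (x : H), v s x = α * Real.exp (-(ρ * s)) * max ⟪x, ψ⟫ 0 ^ 2) :
    ∀ (s : ℝ) (x : H), ⟪x, ψ⟫ ≠ 0 →
      (∀ᶠ y in 𝓝 x, DifferentiableAt ℝ (v s) y) ∧
        DifferentiableAt ℝ (fderiv ℝ (v s)) x ∧
        -ρ * v s x + lam * fderiv ℝ (v s) x x
            + β ^ 2 / 2 * fderiv ℝ (fderiv ℝ (v s)) x x x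
            - Real.exp (ρ * s) / 4 * (fderiv ℝ (v s) x φ) ^ 2 = 0 := by
  intro s x hx
  set c : ℝ := α * Real.exp (-(ρ * s)) with hc
  set L : H →L[ℝ] ℝ := innerSL ℝ ψ with hLdef
  have hLy : ∀ y : H, L y = ⟪y, ψ⟫ := fun y => by simp [hLdef, real_inner_comm]
  have hcont : Continuous fun y : H => (⟪y, ψ⟫ : ℝ) := L.continuous.congr (fun y => (hLy y))
  rcases hx.lt_or_gt with hneg | hpos
  · -- negative side : v is locally 0
    have hev : ∀ᶠ y in 𝓝 x, ⟪y, ψ⟫ < (0:ℝ) :=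
      (isOpen_lt hcont continuous_const).eventually_mem hneg
    have hloc : ∀ y : H, ⟪y, ψ⟫ < (0:ℝ) → v s =ᶠ[𝓝 y] fun _ => (0:ℝ) := by
      intro y hy
      filter_upwards [(isOpen_lt hcont continuous_const).eventually_mem hy] with z hz
      simp [hv, max_eq_right hz.le]
    have hveq : v s =ᶠ[𝓝 x] fun _ => (0:ℝ) := hloc x hneg
    have hd1 : ∀ᶠ y in 𝓝 x, DifferentiableAt ℝ (v s) y := by
      filter_upwards [hev] with y hy
      exact ((differentiableAt_const (0:ℝ)).congr_of_eventuallyEq (hloc y hy))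
    have hfd : fderiv ℝ (v s) =ᶠ[𝓝 x] fun _ => (0 : H →L[ℝ] ℝ) := by
      filter_upwards [hev] with y hy
      rw [(hloc y hy).fderiv_eq, fderiv_fun_const]
      rfl
    have h2eq : fderiv ℝ (fderiv ℝ (v s)) x = 0 := by
      rw [hfd.fderiv_eq, fderiv_fun_const]
      rfl
    have h2d : DifferentiableAt ℝ (fderiv ℝ (v s)) x :=
      (differentiableAt_const _).congr_of_eventuallyEq hfd
    have h1 : fderiv ℝ (v s) x = 0 := by rw [hveq.fderiv_eq, fderiv_fun_const]; rfl
    have h0 : v s x = 0 := by simp [hv, max_eq_right hneg.le]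
    refine ⟨hd1, h2d, ?_⟩
    simp [h0, h1, h2eq]
  · -- positive side
    have hev : ∀ᶠ y in 𝓝 x, (0:ℝ) < ⟪y, ψ⟫ :=
      (isOpen_lt continuous_const hcont).eventually_mem hpos
    set G : H →L[ℝ] H →L[ℝ] ℝ := ((2 * c) • L).smulRight L with hGdef
    have hGapp : ∀ y z : H, G y z = (2 * c * ⟪y, ψ⟫) * ⟪z, ψ⟫ := by
      intro y z
      simp [hGdef, hLy, mul_assoc]
    have hf : ∀ y : H, HasFDerivAt (fun z => c * ⟪z, ψ⟫ ^ 2) (G y) y := by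
      intro y
      have h1 : HasFDerivAt (fun z : H => L z) L y := L.hasFDerivAt
      have h2 := (h1.fun_mul h1).const_mul c
      have : (fun z : H => c * (L z * L z)) = fun z : H => c * ⟪z, ψ⟫ ^ 2 := by
        funext z; rw [hLy, sq]
      rw [this] at h2
      refine h2.congr_fderiv ?_
      ext z
      simp [hGdef, hLy]
      ring
    have hloc : ∀ y : H, (0:ℝ) < ⟪y, ψ⟫ → v s =ᶠ[𝓝 y] fun z => c * ⟪z, ψ⟫ ^ 2 := by
      intro y hy
      filter_upwards [(isOpen_lt continuous_const hcont).eventually_mem hy] with z hz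
      rw [hv, max_eq_left hz.le, hc]
    have hd1 : ∀ᶠ y in 𝓝 x, DifferentiableAt ℝ (v s) y := by
      filter_upwards [hev] with y hy
      exact (hf y).differentiableAt.congr_of_eventuallyEq (hloc y hy)
    have hfd : fderiv ℝ (v s) =ᶠ[𝓝 x] fun y => G y := by
      filter_upwards [hev] with y hy
      rw [(hloc y hy).fderiv_eq, (hf y).fderiv]
    have h2eq : fderiv ℝ (fderiv ℝ (v s)) x = G := by
      rw [hfd.fderiv_eq, G.fderiv]
    have h2d : DifferentiableAt ℝ (fderiv ℝ (v s)) x :=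
      G.differentiableAt.congr_of_eventuallyEq hfd
    have h1 : fderiv ℝ (v s) x = G x := by
      rw [(hloc x hpos).fderiv_eq, (hf x).fderiv]
    have h0 : v s x = c * ⟪x, ψ⟫ ^ 2 := by
      rw [hv, max_eq_left hpos.le, hc]
    refine ⟨hd1, h2d, ?_⟩
    rw [h0, h1, h2eq]; simp only [hGapp]
    have key : α * ⟪φ, ψ⟫ ^ 2 = -ρ + 2 * lam + β ^ 2 := by
      rw [hα]; field_simp
    have hE : Real.exp (ρ * s) * Real.exp (-(ρ * s)) = 1 := by
      rw [← Real.exp_add]; simp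
    rw [hc]
    set e := Real.exp (-(ρ * s))
    set E := Real.exp (ρ * s)
    set m := (⟪x, ψ⟫ : ℝ)
    set p := (⟪φ, ψ⟫ : ℝ)
    linear_combination (-(α * e * m ^ 2)) * key + (-(α ^ 2 * e * m ^ 2 * p ^ 2)) * hE
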